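/- A matrix ŵ : Fin n → Fin m → ℝ with all entries in [0,1] is a Nash equilibrium of the weight game if and only if both of the following hold: (1) for every task q there exists an agent i that is dominating for q with ŵ i q = 1; and (2) for every task q and every agent j that is not dominating for q, ŵ j q = 0. -/

import Mathlib

open Finset Filter

noncomputable def fsMax (s : Finset ℝ) : ℝ := WithBot.unbotD 0 s.max

noncomputable def fsMin (s : Finset ℝ) : ℝ := WithTop.untopD 0 s.min

noncomputable def fsSubmax (s : Finset ℝ) : ℝ := fsMax (s.filter (fun x => x < fsMax s))

/-- Agent `i` is dominating for task `q`. -/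
def Dominating {n m : ℕ} (f : Fin n → Fin m → ℝ) (i : Fin n) (q : Fin m) : Prop :=
  ∀ j, f j q ≤ f i q

/-- Maximum of `g j` over all `j ≠ i` (0 if that set is empty). -/
noncomputable def maxErase {n : ℕ} (i : Fin n) (g : Fin n → ℝ) : ℝ :=
  fsMax ((Finset.univ.erase i).image g)

/-- Utility of agent `i` in the weight game. -/
noncomputable def Uutil {n m : ℕ} (f : Fin n → Fin m → ℝ) (w : Fin n → Fin m → ℝ)
    (i : Fin n) : ℝ :=
  ∑ q, (f i q * w i q - maxErase i (fun j => f j q * w j q) * w i q)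

/-- All entries of the matrix lie in `[0,1]`. -/
def InUnit {n m : ℕ} (w : Fin n → Fin m → ℝ) : Prop :=
  ∀ i q, w i q ∈ Set.Icc (0 : ℝ) 1

/-- Nash equilibrium of the weight game. -/
def IsNashW {n m : ℕ} (f : Fin n → Fin m → ℝ) (w : Fin n → Fin m → ℝ) : Prop :=
  ∀ i, ∀ w' : Fin m → ℝ, (∀ q, w' q ∈ Set.Icc (0 : ℝ) 1) →
    Uutil f (Function.update w i w') i ≤ Uutil f w i

lemma le_fsMax {s : Finset ℝ} {x : ℝ} (hx : x ∈ s) : x ≤ fsMax s := by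
  have h := Finset.le_max hx
  unfold fsMax
  cases hm : s.max with
  | bot => rw [hm] at h; simp at h
  | coe a => rw [hm] at h; simpa using h

lemma fsMax_le {s : Finset ℝ} {a : ℝ} (ha : 0 ≤ a) (h : ∀ x ∈ s, x ≤ a) : fsMax s ≤ a := by
  unfold fsMax
  cases hm : s.max with
  | bot => simpa using ha
  | coe b => simpa using h b (Finset.mem_of_max hm)

lemma le_maxErase {n : ℕ} {i j : Fin n} (hj : j ≠ i) (g : Fin n → ℝ) :
    g j ≤ maxErase i g :=
  le_fsMax (Finset.mem_image_of_mem g (Finset.mem_erase.2 ⟨hj, Finset.mem_univ j⟩))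

lemma maxErase_le {n : ℕ} {i : Fin n} {g : Fin n → ℝ} {a : ℝ} (ha : 0 ≤ a)
    (h : ∀ j, j ≠ i → g j ≤ a) : maxErase i g ≤ a := by
  apply fsMax_le ha
  intro x hx
  rcases Finset.mem_image.1 hx with ⟨j, hj, rfl⟩
  exact h j (Finset.mem_erase.1 hj).1

lemma maxErase_update {n m : ℕ} (f : Fin n → Fin m → ℝ) (w : Fin n → Fin m → ℝ)
    (i : Fin n) (w' : Fin m → ℝ) (q : Fin m) :
    maxErase i (fun j => f j q * Function.update w i w' j q)
      = maxErase i (fun j => f j q * w j q) := by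
  unfold maxErase
  congr 1
  apply Finset.image_congr
  intro j hj
  have hji : j ≠ i := by simpa using hj
  simp [Function.update_of_ne hji]

lemma Uutil_update {n m : ℕ} (f w : Fin n → Fin m → ℝ) (i : Fin n) (w' : Fin m → ℝ) :
    Uutil f (Function.update w i w') i
      = ∑ q, (f i q - maxErase i (fun j => f j q * w j q)) * w' q := by
  unfold Uutil
  apply Finset.sum_congr rfl
  intro q _
  rw [maxErase_update]
  simp only [Function.update_self]
  ring

lemma Uutil_eq {n m : ℕ} (f w : Fin n → Fin m → ℝ) (i : Fin n) :
    Uutil f w i = ∑ q, (f i q - maxErase i (fun j => f j q * w j q)) * w i q := by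
  have h := Uutil_update f w i (w i)
  rwa [Function.update_eq_self] at h

lemma sum_diff_single {m : ℕ} (a b : Fin m → ℝ) (q : Fin m)
    (h : ∀ p, p ≠ q → a p = b p) : (∑ p, a p) - (∑ p, b p) = a q - b q := by
  rw [← Finset.add_sum_erase _ a (Finset.mem_univ q),
      ← Finset.add_sum_erase _ b (Finset.mem_univ q)]
  have he : ∑ p ∈ Finset.univ.erase q, a p = ∑ p ∈ Finset.univ.erase q, b p :=
    Finset.sum_congr rfl (fun p hp => h p (Finset.mem_erase.1 hp).1)
  rw [he]; ring

lemma nash_pointwise {n m : ℕ} {f what : Fin n → Fin m → ℝ}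
    (hwhat : InUnit what) (hN : IsNashW f what) (i : Fin n) (q : Fin m)
    {x : ℝ} (hx : x ∈ Set.Icc (0:ℝ) 1) :
    (f i q - maxErase i (fun j => f j q * what j q)) * x
      ≤ (f i q - maxErase i (fun j => f j q * what j q)) * what i q := by
  have hdev := hN i (Function.update (what i) q x)
    (fun p => by
      by_cases hp : p = q
      · subst hp; simpa using hx
      · rw [Function.update_of_ne hp]; exact hwhat i p)
  rw [Uutil_update, Uutil_eq] at hdev
  have hd := sum_diff_single
    (fun p => (f i p - maxErase i (fun j => f j p * what j p)) * Function.update (what i) q x p)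
    (fun p => (f i p - maxErase i (fun j => f j p * what j p)) * what i p)
    q (fun p hp => by rw [Function.update_of_ne hp])
  simp only [Function.update_self] at hd
  linarith

theorem nash_weight_game_characterization {n m : ℕ} (f : Fin n → Fin m → ℝ)
    (hf : ∀ i q, 0 ≤ f i q)
    (hnt : ∀ q : Fin m, ∃ j : Fin n, ¬ Dominating f j q)
    (what : Fin n → Fin m → ℝ) (hwhat : InUnit what) :
    IsNashW f what ↔
      ((∀ q, ∃ i, Dominating f i q ∧ what i q = 1) ∧
        (∀ q, ∀ j, ¬ Dominating f j q → what j q = 0)) := by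
  constructor
  · intro hN
    have hpos : ∀ i q, maxErase i (fun j => f j q * what j q) < f i q → what i q = 1 := by
      intro i q h
      have h1 := nash_pointwise hwhat hN i q (Set.mem_Icc.2 ⟨zero_le_one, le_refl 1⟩)
      rw [mul_one] at h1
      have hge : 1 ≤ what i q := by
        have hm : (f i q - maxErase i (fun j => f j q * what j q)) * 1
            ≤ (f i q - maxErase i (fun j => f j q * what j q)) * what i q := by
          rw [mul_one]; exact h1
        exact le_of_mul_le_mul_left hm (by linarith)
      exact le_antisymm (hwhat i q).2 hge
    have hneg : ∀ i q, f i q < maxErase i (fun j => f j q * what j q) → what i q = 0 := by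
      intro i q h
      have h0 := nash_pointwise hwhat hN i q (Set.mem_Icc.2 ⟨le_refl (0:ℝ), zero_le_one⟩)
      rw [mul_zero] at h0
      by_contra hne
      have hgt : 0 < what i q := lt_of_le_of_ne (hwhat i q).1 (Ne.symm hne)
      nlinarith [mul_pos (show (0:ℝ) < maxErase i (fun j => f j q * what j q) - f i q by linarith) hgt]
    have h1 : ∀ q, ∃ i, Dominating f i q ∧ what i q = 1 := by
      intro q
      obtain ⟨j0, hj0⟩ := hnt q
      obtain ⟨istar, -, hstar⟩ := Finset.exists_max_image Finset.univ
        (fun i => f i q * what i q) ⟨j0, Finset.mem_univ j0⟩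
      obtain ⟨iF, -, hiF⟩ := Finset.exists_max_image Finset.univ
        (fun i => f i q) ⟨j0, Finset.mem_univ j0⟩
      have hdomF : Dominating f iF q := fun j => hiF j (Finset.mem_univ j)
      have hFpos : 0 < f iF q := by
        unfold Dominating at hj0
        push_neg at hj0
        obtain ⟨k, hk⟩ := hj0
        exact lt_of_le_of_lt (hf j0 q) (lt_of_lt_of_le hk (hdomF k))
      have hTnn : 0 ≤ f istar q * what istar q := mul_nonneg (hf _ _) (hwhat _ _).1
      have hMF : maxErase iF (fun j => f j q * what j q) ≤ f istar q * what istar q :=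
        maxErase_le hTnn (fun j _ => hstar j (Finset.mem_univ j))
      have hTF : f iF q ≤ f istar q * what istar q := by
        by_contra hlt
        push_neg at hlt
        have hw1 : what iF q = 1 := hpos iF q (lt_of_le_of_lt hMF hlt)
        have h2 := hstar iF (Finset.mem_univ iF)
        rw [hw1, mul_one] at h2
        linarith
      have hTle : f istar q * what istar q ≤ f istar q :=
        mul_le_of_le_one_right (hf _ _) (hwhat _ _).2
      have hfst : f iF q ≤ f istar q := le_trans hTF hTle
      have hdomstar : Dominating f istar q := fun j => le_trans (hdomF j) hfst
      have hspos : 0 < f istar q := lt_of_lt_of_le hFpos hfst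
      have h1le : 1 ≤ what istar q := by
        have hm : f istar q * 1 ≤ f istar q * what istar q := by
          rw [mul_one]
          exact le_trans (hdomF istar) hTF
        exact le_of_mul_le_mul_left hm hspos
      exact ⟨istar, hdomstar, le_antisymm (hwhat _ _).2 h1le⟩
    refine ⟨h1, ?_⟩
    intro q j hjnd
    obtain ⟨istar, hdom, hw1⟩ := h1 q
    have hne : istar ≠ j := fun h => hjnd (h ▸ hdom)
    have hMj : f istar q * what istar q ≤ maxErase j (fun k => f k q * what k q) :=
      le_maxErase hne (fun k => f k q * what k q)
    rw [hw1, mul_one] at hMj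
    have hfj : f j q < f istar q := by
      unfold Dominating at hjnd
      push_neg at hjnd
      obtain ⟨k, hk⟩ := hjnd
      exact lt_of_lt_of_le hk (hdom k)
    exact hneg j q (lt_of_lt_of_le hfj hMj)
  · rintro ⟨h1, h2⟩
    intro i w' hw'
    rw [Uutil_update, Uutil_eq]
    apply Finset.sum_le_sum
    intro q _
    obtain ⟨istar, hdom, hw1⟩ := h1 q
    by_cases hd : Dominating f i q
    · have hM : maxErase i (fun j => f j q * what j q) ≤ f i q :=
        maxErase_le (hf i q) (fun j _ =>
          le_trans (mul_le_of_le_one_right (hf j q) (hwhat j q).2) (hd j))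
      by_cases hii : i = istar
      · subst hii
        rw [hw1]
        exact mul_le_mul_of_nonneg_left (hw' q).2 (by linarith)
      · have hMi : f istar q * what istar q ≤ maxErase i (fun j => f j q * what j q) :=
          le_maxErase (fun h => hii h.symm) (fun k => f k q * what k q)
        rw [hw1, mul_one] at hMi
        have h0 : f i q - maxErase i (fun j => f j q * what j q) = 0 := by
          have := hdom i
          linarith
        rw [h0]
        simp
    · have hw0 : what i q = 0 := h2 q i hd
      have hne : istar ≠ i := fun h => hd (h ▸ hdom)
      have hMi : f istar q * what istar q ≤ maxErase i (fun j => f j q * what j q) :=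
        le_maxErase hne (fun k => f k q * what k q)
      rw [hw1, mul_one] at hMi
      have hc : f i q - maxErase i (fun j => f j q * what j q) ≤ 0 := by
        have := hdom i
        linarith
      rw [hw0, mul_zero]
      exact mul_nonpos_of_nonpos_of_nonneg hc (hw' q).1
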